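/- Let K be a field, q = ⟨X_1,...,X_n⟩ ⊆ A = K[X_1,...,X_n], S = A/q^k, and let ε_S : Ω^1_{S/K} → q/q^k be the Euler form given by ε_S(d f) = (deg f)·f for homogeneous f. If char(K) = 0 or char(K) does not divide the positive integer i, then the degree-i part of the Euler–Koszul complex 0 → (Ω^n_{S/K})_i → ... → (Ω^2_{S/K})_i → (Ω^1_{S/K})_i → (q/q^k)_i → 0 is an exact sequence of K-vector spaces. -/

import Mathlib

open MvPolynomial Module

noncomputable section

variable (K : Type) [Field K] (n k : ℕ)

/-- The irrelevant maximal ideal `q = ⟨X_1, ..., X_n⟩` of `A = K[X_1, ..., X_n]`. -/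
def irrIdeal : Ideal (MvPolynomial (Fin n) K) :=
  Ideal.span (Set.range (MvPolynomial.X (R := K) (σ := Fin n)))

/-- The ring `S = K[X_1, ..., X_n]/⟨X_1, ..., X_n⟩^k`. -/
def FatRing : Type := MvPolynomial (Fin n) K ⧸ (irrIdeal K n) ^ k

instance : CommRing (FatRing K n k) := Ideal.Quotient.commRing _
instance : Algebra K (FatRing K n k) := Ideal.Quotient.algebra K

/-- The degree-`e` homogeneous component of the graded ring `S = A/q^k`. -/
def FatRingComp (e : ℕ) : Submodule K (FatRing K n k) :=
  (MvPolynomial.homogeneousSubmodule (Fin n) K e).map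
    (Ideal.Quotient.mkₐ K ((irrIdeal K n) ^ k)).toLinearMap

/-- `K`-module structure on exterior powers of the Kähler differential module, by
restriction of scalars along `K → S`. -/
instance (priority := 10) (m : ℕ) : Module K (⋀[FatRing K n k]^m (Ω[FatRing K n k⁄K])) :=
  Module.compHom _ (algebraMap K (FatRing K n k))

/-- The degree-`i` homogeneous component of the graded `S`-module `Ω¹_{S/K}`. -/
def Omega1Comp (i : ℕ) : Submodule K (Ω[FatRing K n k⁄K]) :=
  Submodule.span K
    {w : Ω[FatRing K n k⁄K] |
      ∃ (e : ℕ) (f : FatRing K n k), f ∈ FatRingComp K n k e ∧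
      ∃ (c : ℕ) (g : FatRing K n k), g ∈ FatRingComp K n k c ∧ e + c = i ∧
        w = f • KaehlerDifferential.D K (FatRing K n k) g}

/-- The degree-`i` homogeneous component of the graded `S`-module `Ω^m_{S/K}`. -/
def OmegaComp (m i : ℕ) : Submodule K (⋀[FatRing K n k]^m (Ω[FatRing K n k⁄K])) :=
  Submodule.span K
    {w : ⋀[FatRing K n k]^m (Ω[FatRing K n k⁄K]) |
      ∃ (e : ℕ) (f : FatRing K n k), f ∈ FatRingComp K n k e ∧
      ∃ (c : Fin m → ℕ) (g : Fin m → FatRing K n k),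
        (∀ j, g j ∈ FatRingComp K n k (c j)) ∧ e + (∑ j, c j) = i ∧
        (w : ExteriorAlgebra (FatRing K n k) (Ω[FatRing K n k⁄K]))
          = f • ExteriorAlgebra.ιMulti (FatRing K n k) m
              (fun j => KaehlerDifferential.D K (FatRing K n k) (g j))}

namespace EKAux

open KaehlerDifferential Finsupp

variable (R S : Type*) [CommRing R] [CommRing S] [Algebra R S]

local notation "Ωm" => KaehlerDifferential R S
local notation "Λm" => ExteriorAlgebra S (KaehlerDifferential R S)
local notation "DD" => KaehlerDifferential.D R S
local notation "ιe" => ExteriorAlgebra.ι S (M := KaehlerDifferential R S)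

/-- auxiliary map `(S →₀ S) → Λ`, `single g f ↦ ι (D f) * ι (D g)`. -/
def dOneAux : (S →₀ S) →ₗ[ℤ] Λm :=
  Finsupp.lsum ℕ fun g =>
    ((LinearMap.mulRight S (ιe (DD g))).restrictScalars ℤ) ∘ₗ
      (((ExteriorAlgebra.ι S (M := Ωm)).restrictScalars ℤ) ∘ₗ
        ((KaehlerDifferential.D R S).toLinearMap.restrictScalars ℤ))

@[simp] lemma dOneAux_single (g f : S) :
    dOneAux R S (Finsupp.single g f) = ιe (DD f) * ιe (DD g) := by
  simp [dOneAux]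

lemma dOneAux_smul (s : S) (v : S →₀ S) :
    dOneAux R S (s • v) =
      algebraMap S Λm s * dOneAux R S v +
        ιe (DD s) * ιe (Finsupp.linearCombination S (M := Ωm) (DD) v) := by
  induction v using Finsupp.induction_linear with
  | zero => simp
  | add f g hf hg =>
    rw [smul_add, map_add, hf, hg, map_add, map_add, map_add]
    rw [mul_add, mul_add]
    abel
  | single g f =>
    rw [Finsupp.smul_single, Finsupp.linearCombination_single, dOneAux_single, smul_eq_mul,
      dOneAux_single, Derivation.leibniz, map_add, map_smul, map_smul, add_mul,
      smul_mul_assoc, smul_mul_assoc, Algebra.smul_def, map_smul, mul_smul_comm]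

lemma kerTotal_le_ker_dOneAux :
    (KaehlerDifferential.kerTotal R S).restrictScalars ℤ ≤ LinearMap.ker (dOneAux R S) := by
  intro v hv
  -- goodSet trick
  let good : Submodule S (S →₀ S) :=
    { carrier := {v | Finsupp.linearCombination S (M := Ωm) (DD) v = 0 ∧ dOneAux R S v = 0}
      add_mem' := by
        rintro a b ⟨ha1, ha2⟩ ⟨hb1, hb2⟩
        constructor <;> rw [map_add] <;> simp [ha1, ha2, hb1, hb2]
      zero_mem' := by simp
      smul_mem' := by
        rintro s v ⟨h1, h2⟩
        refine ⟨by rw [map_smul, h1, smul_zero], ?_⟩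
        rw [dOneAux_smul, h1, h2, mul_zero, map_zero, mul_zero, add_zero] }
  have hsub : KaehlerDifferential.kerTotal R S ≤ good := by
    rw [KaehlerDifferential.kerTotal, Submodule.span_le]
    rintro _ ((⟨⟨x, y⟩, rfl⟩ | ⟨⟨x, y⟩, rfl⟩) | ⟨x, rfl⟩) <;>
      refine ⟨?_, ?_⟩ <;>
      simp [map_add, map_sub, Derivation.leibniz, ExteriorAlgebra.ι_add_mul_swap,
        smul_mul_assoc, mul_smul_comm]
  exact LinearMap.mem_ker.mpr (hsub hv).2

/-- The exterior derivative `Ω¹ → Λ²Ω¹ ⊆ Λ`, `f • D g ↦ ι (D f) * ι (D g)`. -/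
def d1 : Ωm →ₗ[ℤ] Λm :=
  (Submodule.liftQ ((KaehlerDifferential.kerTotal R S).restrictScalars ℤ) (dOneAux R S)
      (kerTotal_le_ker_dOneAux R S)) ∘ₗ
    ((Submodule.Quotient.restrictScalarsEquiv ℤ
        (KaehlerDifferential.kerTotal R S)).symm.toLinearMap) ∘ₗ
    ((KaehlerDifferential.quotKerTotalEquiv R S).symm.toLinearMap.restrictScalars ℤ)

lemma d1_smul_D (f g : S) : d1 R S (f • DD g) = ιe (DD f) * ιe (DD g) := by
  have h1 : (KaehlerDifferential.quotKerTotalEquiv R S).symm (DD g) =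
      Submodule.Quotient.mk (Finsupp.single g 1) := by
    have := KaehlerDifferential.quotKerTotalEquiv_symm_comp_D R S
    have h2 := Derivation.congr_fun this g
    simpa [KaehlerDifferential.derivationQuotKerTotal_apply, Submodule.mkQ_apply] using h2
  have h3 : (KaehlerDifferential.quotKerTotalEquiv R S).symm (f • DD g) =
      Submodule.Quotient.mk (Finsupp.single g f) := by
    rw [map_smul, h1, ← Submodule.Quotient.mk_smul, Finsupp.smul_single, smul_eq_mul, mul_one]
  rw [d1]
  simp only [LinearMap.comp_apply, LinearMap.restrictScalars_apply, LinearEquiv.coe_coe]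
  rw [h3, Submodule.Quotient.restrictScalarsEquiv_symm_mk, Submodule.liftQ_apply,
    dOneAux_single]

lemma d1_D (g : S) : d1 R S (DD g) = 0 := by
  have := d1_smul_D R S 1 g
  rw [one_smul] at this
  rw [this]
  simp

/-- induction principle for `Ω`: additive predicates holding on `f • D g` hold everywhere. -/
lemma omega_induction {P : Ωm → Prop} (h0 : P 0)
    (hadd : ∀ a b, P a → P b → P (a + b))
    (hgen : ∀ f g : S, P (f • DD g)) : ∀ v, P v := by
  intro v
  obtain ⟨x, rfl⟩ := KaehlerDifferential.linearCombination_surjective R S v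
  induction x using Finsupp.induction with
  | zero => simpa using h0
  | single_add g f x _ _ ih =>
    rw [map_add, Finsupp.linearCombination_single]
    exact hadd _ _ (hgen f g) ih

lemma d1_smul (s : S) (v : Ωm) :
    d1 R S (s • v) = algebraMap S Λm s * d1 R S v + ιe (DD s) * ιe v := by
  induction v using omega_induction R S with
  | h0 => simp
  | hadd a b ha hb =>
    rw [smul_add, map_add, ha, hb, map_add, map_add, mul_add, mul_add]
    abel
  | hgen f g =>
    rw [smul_smul, d1_smul_D, d1_smul_D, Derivation.leibniz, map_add, map_smul, map_smul,
      add_mul, smul_mul_assoc, smul_mul_assoc, Algebra.smul_def, map_smul, mul_smul_comm]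

lemma involute_d1 (v : Ωm) : CliffordAlgebra.involute (d1 R S v) = d1 R S v := by
  induction v using omega_induction R S with
  | h0 => simp
  | hadd a b ha hb => rw [map_add, map_add, ha, hb]
  | hgen f g => rw [d1_smul_D, map_mul, CliffordAlgebra.involute_ι, CliffordAlgebra.involute_ι,
      neg_mul_neg]

lemma ι_mul_comm (v : Ωm) (x : Λm) : ιe v * x = CliffordAlgebra.involute x * ιe v := by
  induction x using ExteriorAlgebra.induction with
  | algebraMap r => rw [AlgHom.commutes, Algebra.commutes]
  | ι w =>
    rw [CliffordAlgebra.involute_ι, neg_mul, eq_comm, neg_eq_iff_add_eq_zero]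
    exact ExteriorAlgebra.ι_add_mul_swap w v
  | mul a b ha hb => rw [← mul_assoc, ha, mul_assoc, hb, map_mul, mul_assoc]
  | add a b ha hb => rw [mul_add, ha, hb, map_add, add_mul]

lemma d1_mul_ι_comm (v w : Ωm) : d1 R S v * ιe w = ιe w * d1 R S v := by
  rw [ι_mul_comm, involute_d1]

/-- The twisted algebra `B = Λ × Λ` used to define the exterior derivative as an
anti-derivation: `(x, y) ↦ [[involute x, y], [0, x]]`. -/
def BB := Λm × Λm

variable {R S} in
lemma BB_ext {a b : BB R S} (h1 : a.1 = b.1) (h2 : a.2 = b.2) : a = b := Prod.ext h1 h2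

instance : AddCommGroup (BB R S) := inferInstanceAs (AddCommGroup (Λm × Λm))

instance : Mul (BB R S) :=
  ⟨fun a b => (a.1 * b.1, CliffordAlgebra.involute a.1 * b.2 + a.2 * b.1)⟩

instance : One (BB R S) := ⟨((1 : Λm), (0 : Λm))⟩

variable {R S} in
lemma BB_mul_def (a b : BB R S) :
    a * b = (a.1 * b.1, CliffordAlgebra.involute a.1 * b.2 + a.2 * b.1) := rfl

variable {R S} in
@[simp] lemma BB_mul_fst (a b : BB R S) : (a * b).1 = a.1 * b.1 := rfl
variable {R S} in
@[simp] lemma BB_mul_snd (a b : BB R S) :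
    (a * b).2 = CliffordAlgebra.involute a.1 * b.2 + a.2 * b.1 := rfl

variable {R S} in
lemma BB_one_def : (1 : BB R S) = ((1 : Λm), (0 : Λm)) := rfl

variable {R S} in
@[simp] lemma BB_add_fst (a b : BB R S) : (a + b).1 = a.1 + b.1 := rfl
variable {R S} in
@[simp] lemma BB_add_snd (a b : BB R S) : (a + b).2 = a.2 + b.2 := rfl
variable {R S} in
@[simp] lemma BB_zero_fst : (0 : BB R S).1 = 0 := rfl
variable {R S} in
@[simp] lemma BB_zero_snd : (0 : BB R S).2 = 0 := rfl
variable {R S} in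
@[simp] lemma BB_one_fst : (1 : BB R S).1 = 1 := rfl
variable {R S} in
@[simp] lemma BB_one_snd : (1 : BB R S).2 = 0 := rfl

instance : Ring (BB R S) :=
  { (inferInstance : AddCommGroup (BB R S)) with
    mul := (· * ·)
    one := 1
    mul_assoc := fun a b c => by
      refine BB_ext ?_ ?_ <;>
        simp [BB_mul_fst, BB_mul_snd, mul_add, add_mul, mul_assoc] <;> abel
    one_mul := fun a => by refine BB_ext ?_ ?_ <;> simp [BB_mul_fst, BB_mul_snd]
    mul_one := fun a => by refine BB_ext ?_ ?_ <;> simp [BB_mul_fst, BB_mul_snd]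
    left_distrib := fun a b c => by
      refine BB_ext ?_ ?_ <;> simp [BB_mul_fst, BB_mul_snd, mul_add, add_mul] <;> abel
    right_distrib := fun a b c => by
      refine BB_ext ?_ ?_ <;> simp [BB_mul_fst, BB_mul_snd, mul_add, add_mul, map_add] <;> abel
    zero_mul := fun a => by refine BB_ext ?_ ?_ <;> simp [BB_mul_fst, BB_mul_snd]
    mul_zero := fun a => by refine BB_ext ?_ ?_ <;> simp [BB_mul_fst, BB_mul_snd] }

/-- The structure map `S → B`, `s ↦ (s, ι (D s))`. -/
def rho : S →+* BB R S where
  toFun s := (algebraMap S Λm s, ιe (DD s))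
  map_one' := by refine BB_ext ?_ ?_ <;> simp
  map_mul' a b := by
    refine BB_ext ?_ ?_
    · show algebraMap S Λm (a * b) = algebraMap S Λm a * algebraMap S Λm b
      rw [map_mul]
    · show ιe (DD (a * b)) =
        CliffordAlgebra.involute (algebraMap S Λm a) * ιe (DD b) + ιe (DD a) * algebraMap S Λm b
      rw [Derivation.leibniz, map_add, map_smul, map_smul, AlgHom.commutes,
        Algebra.smul_def, Algebra.smul_def, ← Algebra.commutes b (ιe (DD a))]
  map_zero' := by refine BB_ext ?_ ?_ <;> simp
  map_add' a b := BB_ext (map_add (algebraMap S Λm) a b)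
    (by show ιe (DD (a + b)) = ιe (DD a) + ιe (DD b); rw [map_add, map_add])

instance : Algebra S (BB R S) :=
  RingHom.toAlgebra' (rho R S) (by
    rintro s ⟨x, y⟩
    refine BB_ext ?_ ?_ <;> simp only [BB_mul_fst, BB_mul_snd, rho, RingHom.coe_mk, MonoidHom.coe_mk,
      OneHom.coe_mk]
    · exact (Algebra.commutes s x).trans rfl
    · show CliffordAlgebra.involute (algebraMap S Λm s) * y + ιe (DD s) * x =
        CliffordAlgebra.involute x * ιe (DD s) + y * algebraMap S Λm s
      rw [AlgHom.commutes, ι_mul_comm R S (DD s) x, ← Algebra.commutes s y]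
      exact add_comm _ _)

/-- `Ω → B`, `v ↦ (ι v, d1 v)`, an `S`-linear map. -/
def phiB : Ωm →ₗ[S] BB R S where
  toFun v := (ιe v, d1 R S v)
  map_add' a b := BB_ext (map_add ιe a b) (map_add (d1 R S) a b)
  map_smul' s v := by
    refine BB_ext ?_ ?_
    · show ιe (s • v) = ((rho R S s) * (show BB R S from (ιe v, d1 R S v))).1
      rw [BB_mul_def, map_smul]
      exact (Algebra.smul_def s (ιe v)).trans rfl
    · show d1 R S (s • v) = ((rho R S s) * (show BB R S from (ιe v, d1 R S v))).2
      rw [BB_mul_def, d1_smul]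
      show _ = CliffordAlgebra.involute (algebraMap S Λm s) * d1 R S v + ιe (DD s) * ιe v
      rw [AlgHom.commutes]

lemma phiB_sq (v : Ωm) : phiB R S v * phiB R S v = 0 := by
  refine BB_ext ?_ ?_
  · show ιe v * ιe v = 0
    exact ExteriorAlgebra.ι_sq_zero v
  · show CliffordAlgebra.involute (ιe v) * d1 R S v + d1 R S v * ιe v = 0
    rw [CliffordAlgebra.involute_ι, neg_mul, ← d1_mul_ι_comm, neg_add_cancel]

/-- The algebra map `Λ → B` recording each element together with its exterior derivative. -/
def FF : Λm →ₐ[S] BB R S :=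
  ExteriorAlgebra.lift S ⟨phiB R S, phiB_sq R S⟩

/-- first projection as an algebra hom `B → Λ`. -/
def fstHom : BB R S →ₐ[S] Λm where
  toFun b := b.1
  map_one' := rfl
  map_mul' a b := rfl
  map_zero' := rfl
  map_add' a b := rfl
  commutes' s := rfl

lemma FF_fst (x : Λm) : (FF R S x).1 = x := by
  have h : (fstHom R S).comp (FF R S) = AlgHom.id S Λm := by
    apply ExteriorAlgebra.hom_ext
    refine LinearMap.ext fun v => ?_
    show ((FF R S) (ιe v)).1 = ιe v
    rw [FF, ExteriorAlgebra.lift_ι_apply]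
    rfl
  exact congrArg (fun f => f x) (congrArg DFunLike.coe h)

/-- The exterior derivative on the full exterior algebra of `Ω[S⁄R]`. -/
def delta : Λm →+ Λm :=
  AddMonoidHom.mk' (fun x => (FF R S x).2)
    (fun a b => by show ((FF R S) (a + b)).2 = _; rw [map_add]; rfl)

lemma delta_ι (v : Ωm) : delta R S (ιe v) = d1 R S v := by
  show ((FF R S) (ιe v)).2 = _
  rw [FF, ExteriorAlgebra.lift_ι_apply]
  rfl

lemma delta_mul (x y : Λm) :
    delta R S (x * y) =
      CliffordAlgebra.involute x * delta R S y + delta R S x * y := by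
  show ((FF R S) (x * y)).2 = _
  rw [map_mul, BB_mul_def, FF_fst, FF_fst]
  rfl

lemma delta_algebraMap (s : S) : delta R S (algebraMap S Λm s) = ιe (DD s) := by
  show ((FF R S) (algebraMap S Λm s)).2 = _
  rw [AlgHom.commutes]
  rfl

lemma delta_one : delta R S 1 = 0 := by
  have := delta_algebraMap R S 1
  simpa using this

lemma delta_smul (s : S) (x : Λm) :
    delta R S (s • x) = s • delta R S x + ιe (DD s) * x := by
  rw [Algebra.smul_def, delta_mul, AlgHom.commutes, delta_algebraMap, ← Algebra.smul_def]

lemma ιMulti_cons {p : ℕ} (a : Ωm) (w : Fin p → Ωm) :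
    ExteriorAlgebra.ιMulti S (p+1) (Fin.cons a w) = ιe a * ExteriorAlgebra.ιMulti S p w := by
  rw [ExteriorAlgebra.ιMulti_succ_apply]
  congr 1

lemma ι_mul_ιMulti_succAbove :
    ∀ (p : ℕ) (v : Fin (p+1) → Ωm) (j : Fin (p+1)),
      ιe (v j) * ExteriorAlgebra.ιMulti S p (v ∘ j.succAbove) =
        ((-1 : ℤ) ^ (j : ℕ)) • ExteriorAlgebra.ιMulti S (p+1) v
  | 0, v, j => by
    have hj : j = 0 := Fin.fin_one_eq_zero j
    subst hj
    rw [ExteriorAlgebra.ιMulti_zero_apply, mul_one, Fin.val_zero, pow_zero, one_smul,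
      ExteriorAlgebra.ιMulti_succ_apply, ExteriorAlgebra.ιMulti_zero_apply, mul_one]
  | (p+1), v, j => by
    refine Fin.cases ?_ (fun l => ?_) j
    · rw [Fin.val_zero, pow_zero, one_smul]
      have h0 : v ∘ (0 : Fin (p+2)).succAbove = Fin.tail v := by
        funext u
        show v ((0 : Fin (p+2)).succAbove u) = v u.succ
        rw [Fin.succAbove_zero]
      rw [h0, ← ιMulti_cons, Fin.cons_self_tail]
    · have hcomp : v ∘ (Fin.succ l).succAbove = Fin.cons (v 0) (Fin.tail v ∘ l.succAbove) := by
        funext t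
        refine Fin.cases ?_ (fun u => ?_) t
        · show v ((Fin.succ l).succAbove 0) = v 0
          rw [Fin.succ_succAbove_zero]
        · show v ((Fin.succ l).succAbove u.succ) = Fin.tail v (l.succAbove u)
          rw [Fin.succ_succAbove_succ]
          rfl
      have ih := ι_mul_ιMulti_succAbove p (Fin.tail v) l
      rw [show v (Fin.succ l) = Fin.tail v l from rfl, hcomp, ιMulti_cons, ← mul_assoc,
        show ιe (Fin.tail v l) * ιe (v 0) = -(ιe (v 0) * ιe (Fin.tail v l)) from
          eq_neg_of_add_eq_zero_left (ExteriorAlgebra.ι_add_mul_swap _ _),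
        neg_mul, mul_assoc, ih, mul_smul_comm, ← ιMulti_cons, Fin.cons_self_tail,
        Fin.val_succ, pow_succ, mul_neg_one, neg_smul]

lemma delta_ιMulti_D :
    ∀ (p : ℕ) (g : Fin p → S),
      delta R S (ExteriorAlgebra.ιMulti S p (fun j => DD (g j))) = 0
  | 0, g => by rw [ExteriorAlgebra.ιMulti_zero_apply, delta_one]
  | (p+1), g => by
    rw [ExteriorAlgebra.ιMulti_succ_apply, delta_mul, delta_ι, d1_D, zero_mul, add_zero]
    have hmt : Matrix.vecTail (fun j : Fin (p+1) => DD (g j)) =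
        fun j : Fin p => DD (g (Fin.succ j)) := rfl
    rw [hmt, delta_ιMulti_D p (fun j => g (Fin.succ j)), mul_zero]

lemma delta_smul_ιMulti_D (p : ℕ) (f : S) (g : Fin p → S) :
    delta R S (f • ExteriorAlgebra.ιMulti S p (fun j => DD (g j))) =
      ιe (DD f) * ExteriorAlgebra.ιMulti S p (fun j => DD (g j)) := by
  rw [delta_smul, delta_ιMulti_D, smul_zero, zero_add]

end EKAux
section FatStuff

open EKAux

variable {K : Type} [Field K] {n k : ℕ}

local notation "S'" => FatRing K n k
local notation "Ω'" => KaehlerDifferential K (FatRing K n k)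
local notation "Λ'" => ExteriorAlgebra (FatRing K n k) (KaehlerDifferential K (FatRing K n k))
local notation "DD'" => KaehlerDifferential.D K (FatRing K n k)
local notation "ι'" => ExteriorAlgebra.ι (FatRing K n k)
  (M := KaehlerDifferential K (FatRing K n k))

lemma one_mem_comp : (1 : S') ∈ FatRingComp K n k 0 :=
  ⟨1, (MvPolynomial.mem_homogeneousSubmodule _ _).mpr (MvPolynomial.isHomogeneous_one _ _),
    by show Ideal.Quotient.mkₐ K (irrIdeal K n ^ k) 1 = 1; rw [map_one]⟩

lemma mul_mem_comp {e c : ℕ} {f g : S'} (hf : f ∈ FatRingComp K n k e)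
    (hg : g ∈ FatRingComp K n k c) : f * g ∈ FatRingComp K n k (e + c) := by
  obtain ⟨p, hp, rfl⟩ := hf
  obtain ⟨q, hq, rfl⟩ := hg
  exact ⟨p * q, (MvPolynomial.mem_homogeneousSubmodule _ _).mpr
    (((MvPolynomial.mem_homogeneousSubmodule _ _).mp hp).mul
      ((MvPolynomial.mem_homogeneousSubmodule _ _).mp hq)),
    by show Ideal.Quotient.mkₐ K (irrIdeal K n ^ k) (p * q) = _; rw [map_mul]; rfl⟩


set_option maxHeartbeats 2000000 in
lemma Lsum (ε : Ω' →ₗ[FatRing K n k] S')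
    (hε : ∀ (d : ℕ) (f : S'), f ∈ FatRingComp K n k d → ε (DD' f) = (d : ℕ) • f)
    (N e : ℕ) (f : S') (hf : f ∈ FatRingComp K n k e)
    (c : Fin (N+1) → ℕ) (g : Fin (N+1) → S') (hg : ∀ t, g t ∈ FatRingComp K n k (c t)) :
    (∑ j : Fin (N+2), ((-1 : ℤ) ^ (j : ℕ)) •
        (ε ((Fin.cons (DD' f) (fun u => DD' (g u)) : Fin (N+2) → Ω[FatRing K n k⁄K]) j) •
          ExteriorAlgebra.ιMulti S' (N+1)
            (fun t => (Fin.cons (DD' f) (fun u => DD' (g u)) : Fin (N+2) → Ω[FatRing K n k⁄K]) (j.succAbove t))))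
      + delta K S' (f • ∑ l : Fin (N+1), ((-1 : ℤ) ^ (l : ℕ)) •
          (ε (DD' (g l)) • ExteriorAlgebra.ιMulti S' N (fun t => DD' (g (l.succAbove t)))))
      = ((e + ∑ t, c t : ℕ) : ℕ) •
          (f • ExteriorAlgebra.ιMulti S' (N+1) (fun u => DD' (g u))) := by
  classical
  set Y := ExteriorAlgebra.ιMulti S' (N+1) (fun u => DD' (g u)) with hYdef
  set T : Fin (N+1) → Λ' := fun l =>
    ExteriorAlgebra.ιMulti S' N (fun t => DD' (g (l.succAbove t))) with hTdef
  set M : Fin (N+1) → Λ' := fun l =>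
    ExteriorAlgebra.ιMulti S' (N+1)
      (Fin.cons (DD' f) (fun t => DD' (g (l.succAbove t)))) with hMdef
  -- basic evaluations
  have hcons0 : ∀ j : Fin (N+1),
      (fun t => (Fin.cons (DD' f) (fun u => DD' (g u)) : Fin (N+2) → Ω[FatRing K n k⁄K]) ((0 : Fin (N+2)).succAbove t)) =
        (fun u => DD' (g u)) := by
    intro j
    funext t
    rw [Fin.succAbove_zero, Fin.cons_succ]
  have hconsS : ∀ l : Fin (N+1),
      (fun t => (Fin.cons (DD' f) (fun u => DD' (g u)) : Fin (N+2) → Ω[FatRing K n k⁄K]) ((Fin.succ l).succAbove t)) =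
        Fin.cons (DD' f) (fun t => DD' (g (l.succAbove t))) := by
    intro l
    funext t
    refine Fin.cases ?_ (fun u => ?_) t
    · show (Fin.cons (DD' f) (fun u => DD' (g u)) : Fin (N+2) → Ω[FatRing K n k⁄K]) ((Fin.succ l).succAbove 0) = DD' f
      rw [Fin.succ_succAbove_zero, Fin.cons_zero]
    · show (Fin.cons (DD' f) (fun u => DD' (g u)) : Fin (N+2) → Ω[FatRing K n k⁄K]) ((Fin.succ l).succAbove u.succ) = _
      rw [Fin.succ_succAbove_succ, Fin.cons_succ]
      rfl
  -- the first sum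
  have h1 : (∑ j : Fin (N+2), ((-1 : ℤ) ^ (j : ℕ)) •
        (ε ((Fin.cons (DD' f) (fun u => DD' (g u)) : Fin (N+2) → Ω[FatRing K n k⁄K]) j) •
          ExteriorAlgebra.ιMulti S' (N+1)
            (fun t => (Fin.cons (DD' f) (fun u => DD' (g u)) : Fin (N+2) → Ω[FatRing K n k⁄K]) (j.succAbove t))))
      = ((e : S') * f) • Y
        + ∑ l : Fin (N+1), ((-1 : ℤ) ^ ((l : ℕ) + 1)) • ((((c l) : S') * g l) • M l) := by
    rw [Fin.sum_univ_succ]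
    congr 1
    · rw [Fin.cons_zero, hε e f hf, hcons0 0, Fin.val_zero, pow_zero, one_smul,
        nsmul_eq_mul]
    · refine Finset.sum_congr rfl fun l _ => ?_
      rw [Fin.cons_succ, hε (c l) (g l) (hg l), Fin.val_succ, hconsS l, nsmul_eq_mul]
  -- the sign simplification for `ι (D (g l)) * T l`
  have hsign : ∀ l : Fin (N+1), ι' (DD' (g l)) * T l = ((-1 : ℤ) ^ (l : ℕ)) • Y := by
    intro l
    have h := ι_mul_ιMulti_succAbove K S' N (fun u => DD' (g u)) l
    rw [show ((fun u => DD' (g u)) ∘ l.succAbove) = (fun t => DD' (g (l.succAbove t)))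
      from rfl] at h
    exact h
  -- `ι (D f) * T l = M l`
  have hDfT : ∀ l : Fin (N+1), ι' (DD' f) * T l = M l := by
    intro l
    exact (ιMulti_cons K S' (DD' f) (fun t => DD' (g (l.succAbove t)))).symm
  -- the derivative of the second factor
  have hδ : delta K S' (f • ∑ l : Fin (N+1), ((-1 : ℤ) ^ (l : ℕ)) •
        (ε (DD' (g l)) • ExteriorAlgebra.ιMulti S' N (fun t => DD' (g (l.succAbove t)))))
      = (∑ l : Fin (N+1), (((c l) : S') * f)) • Y
        + ∑ l : Fin (N+1), ((-1 : ℤ) ^ (l : ℕ)) • ((((c l) : S') * g l) • M l) := by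
    have hσ : ∀ l : Fin (N+1), ε (DD' (g l)) = ((c l : ℕ) : S') * g l := by
      intro l; rw [hε (c l) (g l) (hg l), nsmul_eq_mul]
    have hDσ : ∀ l : Fin (N+1),
        ι' (DD' (((c l : ℕ) : S') * g l)) = ((c l : ℕ) : S') • ι' (DD' (g l)) := by
      intro l
      rw [Derivation.leibniz, Derivation.map_natCast, smul_zero, add_zero, map_smul]
    have hsq : ∀ l : Fin (N+1),
        ((-1:ℤ)^(l:ℕ)) • (((c l : ℕ) : S') • (((-1:ℤ)^(l:ℕ)) • Y)) = ((c l : ℕ) : S') • Y := by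
      intro l
      rw [smul_comm ((-1:ℤ)^(l:ℕ)) (((c l : ℕ) : S')), smul_smul, ← pow_add,
        Even.neg_one_pow ⟨(l:ℕ), rfl⟩, one_smul]
    have hδterm : ∀ l : Fin (N+1),
        delta K S' (((-1:ℤ)^(l:ℕ)) • (ε (DD' (g l)) • T l)) = ((c l : ℕ) : S') • Y := by
      intro l
      have h0 : delta K S' (T l) = 0 := delta_ιMulti_D K S' N fun t => g (l.succAbove t)
      rw [map_zsmul, hσ l, delta_smul, h0, smul_zero, zero_add, hDσ l, smul_mul_assoc,
        hsign l, hsq l]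
    rw [delta_smul]
    have hδX : delta K S' (∑ l : Fin (N+1), ((-1 : ℤ) ^ (l : ℕ)) •
          (ε (DD' (g l)) • ExteriorAlgebra.ιMulti S' N (fun t => DD' (g (l.succAbove t)))))
        = ∑ l : Fin (N+1), ((c l : ℕ) : S') • Y := by
      rw [map_sum]
      exact Finset.sum_congr rfl fun l _ => hδterm l
    have hfδ : f • ∑ l : Fin (N+1), ((c l : ℕ) : S') • Y
        = (∑ l : Fin (N+1), ((c l : ℕ) : S') * f) • Y := by
      rw [Finset.smul_sum, Finset.sum_smul]
      exact Finset.sum_congr rfl fun l _ => by rw [smul_smul, mul_comm]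
    have hmulX : ι' (DD' f) * (∑ l : Fin (N+1), ((-1 : ℤ) ^ (l : ℕ)) •
          (ε (DD' (g l)) • ExteriorAlgebra.ιMulti S' N (fun t => DD' (g (l.succAbove t)))))
        = ∑ l : Fin (N+1), ((-1:ℤ)^(l:ℕ)) • ((((c l : ℕ) : S') * g l) • M l) := by
      rw [Finset.mul_sum]
      refine Finset.sum_congr rfl fun l _ => ?_
      rw [mul_smul_comm, mul_smul_comm, hDfT l, hσ l]
    rw [hδX, hfδ, hmulX]
  rw [h1, hδ]
  -- now cancel and collect
  have hcancel : (∑ l : Fin (N+1), ((-1 : ℤ) ^ ((l : ℕ) + 1)) • ((((c l) : S') * g l) • M l))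
      + ∑ l : Fin (N+1), ((-1 : ℤ) ^ (l : ℕ)) • ((((c l) : S') * g l) • M l) = 0 := by
    rw [← Finset.sum_add_distrib]
    refine Finset.sum_eq_zero fun l _ => ?_
    rw [pow_succ, mul_neg_one, neg_smul, neg_add_cancel]
  have hcollect : ((e : S') * f) • Y + (∑ l : Fin (N+1), (((c l) : S') * f)) • Y
      = ((e + ∑ t, c t : ℕ) : ℕ) • (f • Y) := by
    rw [← add_smul, ← Nat.cast_smul_eq_nsmul S', smul_smul]
    congr 1
    push_cast
    rw [add_mul]
    congr 1
    exact (Finset.sum_mul _ _ _).symm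
  calc ((e : S') * f) • Y + ∑ l : Fin (N+1), ((-1 : ℤ) ^ ((l : ℕ) + 1)) • ((((c l) : S') * g l) • M l)
        + ((∑ l : Fin (N+1), (((c l) : S') * f)) • Y
          + ∑ l : Fin (N+1), ((-1 : ℤ) ^ (l : ℕ)) • ((((c l) : S') * g l) • M l))
      = (((e : S') * f) • Y + (∑ l : Fin (N+1), (((c l) : S') * f)) • Y)
        + ((∑ l : Fin (N+1), ((-1 : ℤ) ^ ((l : ℕ) + 1)) • ((((c l) : S') * g l) • M l))
          + ∑ l : Fin (N+1), ((-1 : ℤ) ^ (l : ℕ)) • ((((c l) : S') * g l) • M l)) := by abel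
    _ = ((e + ∑ t, c t : ℕ) : ℕ) • (f • Y) := by rw [hcancel, hcollect, add_zero]


lemma consD_eq {N : ℕ} (f : S') (g : Fin N → S') :
    (Fin.cons (DD' f) (fun j => DD' (g j)) : Fin (N+1) → Ω[FatRing K n k⁄K]) =
      fun j => DD' ((Fin.cons f g : Fin (N+1) → S') j) := by
  funext t
  refine Fin.cases ?_ (fun u => ?_) t
  · rw [Fin.cons_zero, Fin.cons_zero]
  · rw [Fin.cons_succ, Fin.cons_succ]

lemma delta_coe_gen {N : ℕ} (f : S') (g : Fin N → S') :
    delta K S' (f • ExteriorAlgebra.ιMulti S' N (fun j => DD' (g j)))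
      = ExteriorAlgebra.ιMulti S' (N+1) (fun j => DD' ((Fin.cons f g : Fin (N+1) → S') j)) := by
  rw [delta_smul_ιMulti_D, ← ιMulti_cons, consD_eq]

lemma ιMulti_mem (N : ℕ) (v : Fin N → Ω[FatRing K n k⁄K]) :
    ExteriorAlgebra.ιMulti S' N v ∈ ⋀[S']^N (Ω[FatRing K n k⁄K]) :=
  ExteriorAlgebra.ιMulti_range S' N (Set.mem_range_self v)

lemma coe_Ksmul (m : ℕ) (c : K) (x : ⋀[S']^m (Ω[FatRing K n k⁄K])) :
    ((c • x : ⋀[S']^m (Ω[FatRing K n k⁄K])) : Λ') = algebraMap K S' c • (x : Λ') := rfl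

lemma delta_algsmul (c : K) (y : Λ') :
    delta K S' (algebraMap K S' c • y) = algebraMap K S' c • delta K S' y := by
  rw [delta_smul, Derivation.map_algebraMap, map_zero, zero_mul, add_zero]

lemma ιMulti_one_apply (v : Fin 1 → Ω[FatRing K n k⁄K]) :
    ExteriorAlgebra.ιMulti S' 1 v = ι' (v 0) := by
  rw [ExteriorAlgebra.ιMulti_succ_apply, ExteriorAlgebra.ιMulti_zero_apply, mul_one]

lemma W2 (ε : Ω[FatRing K n k⁄K] →ₗ[FatRing K n k] S')
    (hε : ∀ (d : ℕ) (f : S'), f ∈ FatRingComp K n k d → ε (DD' f) = (d : ℕ) • f)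
    (E1 : (⋀[S']^2 (Ω[FatRing K n k⁄K])) →ₗ[FatRing K n k] Ω[FatRing K n k⁄K])
    (hE1 : ∀ (w : Fin 2 → Ω[FatRing K n k⁄K])
        (h : ExteriorAlgebra.ιMulti S' 2 w ∈ ⋀[S']^2 (Ω[FatRing K n k⁄K])),
      E1 ⟨ExteriorAlgebra.ιMulti S' 2 w, h⟩ = ε (w 0) • w 1 - ε (w 1) • w 0)
    (i : ℕ) :
    ∀ w ∈ Omega1Comp K n k i, ∃ v, v ∈ OmegaComp K n k 2 i ∧
      ((v : Λ') = delta K S' (ι' w)) ∧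
      E1 v + DD' (ε w) = (i : ℕ) • w := by
  intro w hw
  refine Submodule.span_induction ?_ ?_ ?_ ?_ hw
  · -- generators
    rintro x ⟨e, f, hf, c, g, hg, hsum, rfl⟩
    set gv : Fin 1 → S' := fun _ => g with hgv
    set fv : Fin 2 → S' := Fin.cons f gv with hfv
    set wv : Fin 2 → Ω[FatRing K n k⁄K] := fun j => DD' (fv j) with hwv
    refine ⟨⟨ExteriorAlgebra.ιMulti S' 2 wv, ιMulti_mem 2 wv⟩, ?_, ?_, ?_⟩
    · refine Submodule.subset_span ⟨0, 1, one_mem_comp, Fin.cons e (fun _ => c), fv,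
        ?_, ?_, ?_⟩
      · intro j
        refine Fin.cases ?_ (fun u => ?_) j
        · simpa [hfv] using hf
        · simpa [hfv, hgv] using hg
      · rw [Fin.sum_cons, Fin.sum_univ_one, zero_add]
        exact hsum
      · rw [one_smul]
    · show ExteriorAlgebra.ιMulti S' 2 wv = delta K S' (ι' (f • DD' g))
      rw [map_smul, delta_smul, delta_ι, d1_D, smul_zero, zero_add, hwv, hfv,
        ← consD_eq, ιMulti_cons, ιMulti_one_apply]
    · rw [hE1 wv (ιMulti_mem 2 wv)]
      have h0 : wv 0 = DD' f := rfl
      have h1 : wv 1 = DD' g := rfl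
      rw [h0, h1, hε e f hf, hε c g hg, map_smul, hε c g hg]
      simp only [nsmul_eq_mul, smul_eq_mul]
      have hDcg : DD' ((c : S') * g) = (c : S') • DD' g := by
        rw [Derivation.leibniz, Derivation.map_natCast, smul_zero, add_zero]
      rw [Derivation.leibniz, hDcg, smul_smul,
        ← Nat.cast_smul_eq_nsmul S' i (f • DD' g), smul_smul]
      have hcoef : (e : S') * f + f * (c : S') = (i : S') * f := by
        rw [← hsum]; push_cast; ring
      rw [show ((e : S') * f) • DD' g - ((c : S') * g) • DD' f +
            ((f * (c : S')) • DD' g + ((c : S') * g) • DD' f)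
          = ((e : S') * f) • DD' g + (f * (c : S')) • DD' g from by abel, ← add_smul, hcoef]
  · exact ⟨0, Submodule.zero_mem _, by simp, by simp⟩
  · rintro x y - - ⟨vx, hvx, hcx, hix⟩ ⟨vy, hvy, hcy, hiy⟩
    refine ⟨vx + vy, Submodule.add_mem _ hvx hvy, ?_, ?_⟩
    · rw [Submodule.coe_add, hcx, hcy, map_add, map_add]
    · rw [map_add, map_add, map_add, smul_add]
      calc E1 vx + E1 vy + (DD' (ε x) + DD' (ε y))
          = (E1 vx + DD' (ε x)) + (E1 vy + DD' (ε y)) := by abel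
        _ = (i:ℕ) • x + (i:ℕ) • y := by rw [hix, hiy]
  · rintro c x - ⟨v, hv, hc, hi'⟩
    refine ⟨c • v, Submodule.smul_mem _ _ hv, ?_, ?_⟩
    · rw [coe_Ksmul, hc, ← delta_algsmul, ← map_smul, algebraMap_smul]
    · have hxc : c • x = algebraMap K S' c • x := (algebraMap_smul S' c x).symm
      have hE1c : E1 (c • v) = algebraMap K S' c • E1 v := by
        rw [show (c • v) = (algebraMap K S' c) • v from rfl, map_smul]
      rw [hxc, hE1c, map_smul ε (algebraMap K S' c) x]
      have hDc : DD' (algebraMap K S' c • ε x) = algebraMap K S' c • DD' (ε x) := by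
        have hz : DD' (algebraMap K S' c) = 0 := Derivation.map_algebraMap _ _
        rw [smul_eq_mul, Derivation.leibniz, hz, smul_zero, add_zero]
      rw [hDc, ← smul_add, hi', smul_comm]


set_option maxHeartbeats 2000000 in
lemma W4 (ε : Ω[FatRing K n k⁄K] →ₗ[FatRing K n k] S')
    (hε : ∀ (d : ℕ) (f : S'), f ∈ FatRingComp K n k d → ε (DD' f) = (d : ℕ) • f)
    (E : ∀ m : ℕ, (⋀[S']^(m+3) (Ω[FatRing K n k⁄K])) →ₗ[FatRing K n k]
        (⋀[S']^(m+2) (Ω[FatRing K n k⁄K])))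
    (hE : ∀ (m : ℕ) (w : Fin (m+3) → Ω[FatRing K n k⁄K])
        (h : ExteriorAlgebra.ιMulti S' (m+3) w ∈ ⋀[S']^(m+3) (Ω[FatRing K n k⁄K])),
      ((E m ⟨ExteriorAlgebra.ιMulti S' (m+3) w, h⟩ : ⋀[S']^(m+2) (Ω[FatRing K n k⁄K])) : Λ')
        = ∑ j : Fin (m+3), ((-1 : ℤ) ^ (j : ℕ)) •
            (ε (w j) • ExteriorAlgebra.ιMulti S' (m+2) (fun t => w (j.succAbove t))))
    (i m : ℕ) :
    ∀ w ∈ OmegaComp K n k (m+3) i, ∃ v, v ∈ OmegaComp K n k (m+4) i ∧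
      ((v : Λ') = delta K S' (w : Λ')) ∧
      ((E (m+1) v : Λ') + delta K S' ((E m w : Λ')) = (i : ℕ) • (w : Λ')) := by
  intro w hw
  refine Submodule.span_induction ?_ ?_ ?_ ?_ hw
  · rintro x ⟨e, f, hf, c, g, hg, hsum, hx⟩
    set wv : Fin (m+4) → Ω[FatRing K n k⁄K] :=
      fun j => DD' ((Fin.cons f g : Fin (m+4) → S') j) with hwv
    refine ⟨⟨ExteriorAlgebra.ιMulti S' (m+4) wv, ιMulti_mem _ wv⟩, ?_, ?_, ?_⟩
    · refine Submodule.subset_span ⟨0, 1, one_mem_comp, Fin.cons e c, Fin.cons f g,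
        ?_, ?_, ?_⟩
      · intro j
        refine Fin.cases ?_ (fun u => ?_) j
        · simpa using hf
        · simpa using hg u
      · rw [Fin.sum_cons, zero_add]
        exact hsum
      · rw [one_smul]
    · show ExteriorAlgebra.ιMulti S' (m+4) wv = delta K S' (x : Λ')
      rw [hx, delta_coe_gen]
    · have hxsub : x = f • (⟨ExteriorAlgebra.ιMulti S' (m+3) (fun j => DD' (g j)),
          ιMulti_mem _ _⟩ : ⋀[S']^(m+3) (Ω[FatRing K n k⁄K])) := by
        apply Subtype.coe_injective
        show (x : Λ') = _
        rw [hx]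
        rfl
      have hEm : ((E m x : ⋀[S']^(m+2) (Ω[FatRing K n k⁄K])) : Λ')
          = f • ∑ l : Fin (m+3), ((-1 : ℤ) ^ (l : ℕ)) •
              (ε (DD' (g l)) •
                ExteriorAlgebra.ιMulti S' (m+2) (fun t => DD' (g (l.succAbove t)))) := by
        rw [hxsub, map_smul, Submodule.coe_smul,
          hE m (fun j => DD' (g j)) (ιMulti_mem _ _)]
      have hEv := hE (m+1) wv (ιMulti_mem _ wv)
      rw [hEm, hEv]
      have hwv2 : wv = (Fin.cons (DD' f) (fun u => DD' (g u)) : Fin (m+4) →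
          Ω[FatRing K n k⁄K]) := (consD_eq f g).symm
      rw [hwv2]
      have key := Lsum ε hε (m+2) e f hf c g hg
      rw [hsum] at key
      rw [key, hx]
  · exact ⟨0, Submodule.zero_mem _, by simp, by simp⟩
  · rintro x y - - ⟨vx, hvx, hcx, hix⟩ ⟨vy, hvy, hcy, hiy⟩
    refine ⟨vx + vy, Submodule.add_mem _ hvx hvy, ?_, ?_⟩
    · rw [Submodule.coe_add, hcx, hcy, Submodule.coe_add, map_add]
    · simp only [map_add, Submodule.coe_add, smul_add]
      rw [← hix, ← hiy]
      abel
  · rintro c x - ⟨v, hv, hc, hi'⟩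
    refine ⟨c • v, Submodule.smul_mem _ _ hv, ?_, ?_⟩
    · rw [coe_Ksmul, coe_Ksmul, hc, delta_algsmul]
    · have hvc : c • v = algebraMap K S' c • v := rfl
      have hxc : c • x = algebraMap K S' c • x := rfl
      rw [hvc, hxc, map_smul, map_smul, Submodule.coe_smul, Submodule.coe_smul,
        Submodule.coe_smul, delta_algsmul, ← smul_add, hi', smul_comm]


set_option maxHeartbeats 2000000 in
lemma W3 (ε : Ω[FatRing K n k⁄K] →ₗ[FatRing K n k] S')
    (hε : ∀ (d : ℕ) (f : S'), f ∈ FatRingComp K n k d → ε (DD' f) = (d : ℕ) • f)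
    (E1 : (⋀[S']^2 (Ω[FatRing K n k⁄K])) →ₗ[FatRing K n k] Ω[FatRing K n k⁄K])
    (hE1 : ∀ (w : Fin 2 → Ω[FatRing K n k⁄K])
        (h : ExteriorAlgebra.ιMulti S' 2 w ∈ ⋀[S']^2 (Ω[FatRing K n k⁄K])),
      E1 ⟨ExteriorAlgebra.ιMulti S' 2 w, h⟩ = ε (w 0) • w 1 - ε (w 1) • w 0)
    (E : ∀ m : ℕ, (⋀[S']^(m+3) (Ω[FatRing K n k⁄K])) →ₗ[FatRing K n k]
        (⋀[S']^(m+2) (Ω[FatRing K n k⁄K])))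
    (hE : ∀ (m : ℕ) (w : Fin (m+3) → Ω[FatRing K n k⁄K])
        (h : ExteriorAlgebra.ιMulti S' (m+3) w ∈ ⋀[S']^(m+3) (Ω[FatRing K n k⁄K])),
      ((E m ⟨ExteriorAlgebra.ιMulti S' (m+3) w, h⟩ : ⋀[S']^(m+2) (Ω[FatRing K n k⁄K])) : Λ')
        = ∑ j : Fin (m+3), ((-1 : ℤ) ^ (j : ℕ)) •
            (ε (w j) • ExteriorAlgebra.ιMulti S' (m+2) (fun t => w (j.succAbove t))))
    (i : ℕ) :
    ∀ w ∈ OmegaComp K n k 2 i, ∃ v, v ∈ OmegaComp K n k 3 i ∧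
      ((v : Λ') = delta K S' (w : Λ')) ∧
      ((E 0 v : Λ') + delta K S' (ι' (E1 w)) = (i : ℕ) • (w : Λ')) := by
  intro w hw
  refine Submodule.span_induction ?_ ?_ ?_ ?_ hw
  · rintro x ⟨e, f, hf, c, g, hg, hsum, hx⟩
    set wv : Fin 3 → Ω[FatRing K n k⁄K] :=
      fun j => DD' ((Fin.cons f g : Fin 3 → S') j) with hwv
    refine ⟨⟨ExteriorAlgebra.ιMulti S' 3 wv, ιMulti_mem _ wv⟩, ?_, ?_, ?_⟩
    · refine Submodule.subset_span ⟨0, 1, one_mem_comp, Fin.cons e c, Fin.cons f g,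
        ?_, ?_, ?_⟩
      · intro j
        refine Fin.cases ?_ (fun u => ?_) j
        · simpa using hf
        · simpa using hg u
      · rw [Fin.sum_cons, zero_add]
        exact hsum
      · rw [one_smul]
    · show ExteriorAlgebra.ιMulti S' 3 wv = delta K S' (x : Λ')
      rw [hx, delta_coe_gen]
    · have hxsub : x = f • (⟨ExteriorAlgebra.ιMulti S' 2 (fun j => DD' (g j)),
          ιMulti_mem _ _⟩ : ⋀[S']^2 (Ω[FatRing K n k⁄K])) := by
        apply Subtype.coe_injective
        show (x : Λ') = _
        rw [hx]
        rfl
      -- the bridge: ι' (E1 x) matches the Lsum δ-argument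
      have hbridge : ι' (E1 x) = f • ∑ l : Fin 2, ((-1 : ℤ) ^ (l : ℕ)) •
          (ε (DD' (g l)) •
            ExteriorAlgebra.ιMulti S' 1 (fun t => DD' (g (l.succAbove t)))) := by
        rw [hxsub, map_smul, hE1 (fun j => DD' (g j)) (ιMulti_mem _ _), map_smul]
        congr 1
        rw [map_sub, map_smul, map_smul, Fin.sum_univ_two]
        have e0 : (fun t : Fin 1 => DD' (g ((0 : Fin 2).succAbove t)))
            = fun _ : Fin 1 => DD' (g 1) := by
          funext t
          rw [Fin.fin_one_eq_zero t]
          rfl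
        have e1 : (fun t : Fin 1 => DD' (g ((1 : Fin 2).succAbove t)))
            = fun _ : Fin 1 => DD' (g 0) := by
          funext t
          rw [Fin.fin_one_eq_zero t]
          rfl
        rw [e0, e1, ιMulti_one_apply, ιMulti_one_apply]
        simp only [Fin.val_zero, pow_zero, one_smul, Fin.val_one, pow_one, neg_smul, one_smul]
        rw [sub_eq_add_neg]
      have hEv := hE 0 wv (ιMulti_mem _ wv)
      rw [hbridge, hEv]
      have hwv2 : wv = (Fin.cons (DD' f) (fun u => DD' (g u)) : Fin 3 →
          Ω[FatRing K n k⁄K]) := (consD_eq f g).symm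
      rw [hwv2]
      have key := Lsum ε hε 1 e f hf c g hg
      rw [hsum] at key
      rw [key, hx]
  · exact ⟨0, Submodule.zero_mem _, by simp, by simp⟩
  · rintro x y - - ⟨vx, hvx, hcx, hix⟩ ⟨vy, hvy, hcy, hiy⟩
    refine ⟨vx + vy, Submodule.add_mem _ hvx hvy, ?_, ?_⟩
    · rw [Submodule.coe_add, hcx, hcy, Submodule.coe_add, map_add]
    · simp only [map_add, Submodule.coe_add, smul_add]
      rw [← hix, ← hiy]
      abel
  · rintro c x - ⟨v, hv, hc, hi'⟩
    refine ⟨c • v, Submodule.smul_mem _ _ hv, ?_, ?_⟩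
    · rw [coe_Ksmul, coe_Ksmul, hc, delta_algsmul]
    · have hvc : c • v = algebraMap K S' c • v := rfl
      have hxc : c • x = algebraMap K S' c • x := rfl
      rw [hvc, hxc, map_smul, map_smul, map_smul, Submodule.coe_smul, Submodule.coe_smul,
        delta_algsmul, ← smul_add, hi', smul_comm]


lemma inv_nsmul_cancel {M : Type*} [AddCommMonoid M] [Module (FatRing K n k) M]
    {i : ℕ} (h : (i : K) ≠ 0) (x : M) :
    algebraMap K (FatRing K n k) ((i : K)⁻¹) • ((i : ℕ) • x) = x := by
  rw [← Nat.cast_smul_eq_nsmul (FatRing K n k) i x, smul_smul,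
    ← map_natCast (algebraMap K (FatRing K n k)) i, ← map_mul, inv_mul_cancel₀ h, map_one,
    one_smul]

end FatStuff

/-- Let `S = K[X_1,...,X_n]/q^k` and let `ε_S : Ω¹_{S/K} → q/q^k` be the Euler form, given by
`ε_S(df) = (deg f)·f` for homogeneous `f`, and let `ε_S^{(m)}` be the associated Koszul
differentials, given on decomposable elements by
`ε_S^{(m)}(w₁ ∧ ... ∧ w_m) = ∑_j (-1)^{j-1} ε_S(w_j) w₁ ∧ ... ∧ ŵ_j ∧ ... ∧ w_m`.
If `char K = 0` or `char K ∤ i` (with `i > 0`), then the degree-`i` part of the Euler–Koszul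
complex `0 → (Ω^n_{S/K})_i → ... → (Ω²_{S/K})_i → (Ω¹_{S/K})_i → (q/q^k)_i → 0` is exact. -/
theorem statement_17 (hn : 1 ≤ n) (hk : 1 ≤ k)
    (ε : Ω[FatRing K n k⁄K] →ₗ[FatRing K n k] FatRing K n k)
    (hε : ∀ (d : ℕ) (f : FatRing K n k), f ∈ FatRingComp K n k d →
      ε (KaehlerDifferential.D K (FatRing K n k) f) = (d : ℕ) • f)
    (E1 : (⋀[FatRing K n k]^2 (Ω[FatRing K n k⁄K])) →ₗ[FatRing K n k] Ω[FatRing K n k⁄K])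
    (hE1 : ∀ (w : Fin 2 → Ω[FatRing K n k⁄K])
        (h : ExteriorAlgebra.ιMulti (FatRing K n k) 2 w ∈
          ⋀[FatRing K n k]^2 (Ω[FatRing K n k⁄K])),
      E1 ⟨ExteriorAlgebra.ιMulti (FatRing K n k) 2 w, h⟩ = ε (w 0) • w 1 - ε (w 1) • w 0)
    (E : ∀ m : ℕ, (⋀[FatRing K n k]^(m+3) (Ω[FatRing K n k⁄K])) →ₗ[FatRing K n k]
        (⋀[FatRing K n k]^(m+2) (Ω[FatRing K n k⁄K])))
    (hE : ∀ (m : ℕ) (w : Fin (m+3) → Ω[FatRing K n k⁄K])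
        (h : ExteriorAlgebra.ιMulti (FatRing K n k) (m+3) w ∈
          ⋀[FatRing K n k]^(m+3) (Ω[FatRing K n k⁄K])),
      ((E m ⟨ExteriorAlgebra.ιMulti (FatRing K n k) (m+3) w, h⟩ :
          ⋀[FatRing K n k]^(m+2) (Ω[FatRing K n k⁄K])) :
          ExteriorAlgebra (FatRing K n k) (Ω[FatRing K n k⁄K]))
        = ∑ j : Fin (m+3), ((-1 : ℤ) ^ (j : ℕ)) •
            (ε (w j) • ExteriorAlgebra.ιMulti (FatRing K n k) (m+2)
              (fun i => w (j.succAbove i))))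
    (i : ℕ) (hi : 1 ≤ i) (hchar : ringChar K = 0 ∨ ¬ (ringChar K ∣ i)) :
    (∀ f ∈ FatRingComp K n k i, ∃ w ∈ Omega1Comp K n k i, ε w = f) ∧
    (∀ w ∈ Omega1Comp K n k i, ε w = 0 → ∃ v ∈ OmegaComp K n k 2 i, E1 v = w) ∧
    (∀ w ∈ OmegaComp K n k 2 i, E1 w = 0 → ∃ v ∈ OmegaComp K n k 3 i, E 0 v = w) ∧
    (∀ m : ℕ, ∀ w ∈ OmegaComp K n k (m+3) i, E m w = 0 →
      ∃ v ∈ OmegaComp K n k (m+4) i, E (m+1) v = w) := by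
  have hKi : (i : K) ≠ 0 := by
    intro h
    rw [ringChar.spec] at h
    rcases hchar with h0 | hnd
    · rw [h0] at h
      exact absurd (zero_dvd_iff.mp h) (by omega)
    · exact hnd h
  refine ⟨?_, ?_, ?_, ?_⟩
  · -- surjectivity onto degree-i part
    intro f hf
    refine ⟨(i : K)⁻¹ • KaehlerDifferential.D K (FatRing K n k) f, ?_, ?_⟩
    · exact Submodule.smul_mem _ _ (Submodule.subset_span
        ⟨0, 1, one_mem_comp, i, f, hf, zero_add i, (one_smul _ _).symm⟩)
    · rw [← algebraMap_smul (FatRing K n k) ((i : K)⁻¹)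
        (KaehlerDifferential.D K (FatRing K n k) f), map_smul, hε i f hf,
        inv_nsmul_cancel hKi]
  · -- exactness at Ω¹
    intro w hw hε0
    obtain ⟨v, hv, -, hid⟩ := W2 ε hε E1 hE1 i w hw
    rw [hε0, map_zero, add_zero] at hid
    refine ⟨(i : K)⁻¹ • v, Submodule.smul_mem _ _ hv, ?_⟩
    have hE1c : E1 ((i : K)⁻¹ • v) = algebraMap K (FatRing K n k) ((i : K)⁻¹) • E1 v := by
      rw [show ((i : K)⁻¹ • v) = algebraMap K (FatRing K n k) ((i : K)⁻¹) • v from rfl,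
        map_smul]
    rw [hE1c, hid, inv_nsmul_cancel hKi]
  · -- exactness at Ω²
    intro w hw h0
    obtain ⟨v, hv, -, hid⟩ := W3 ε hε E1 hE1 E hE i w hw
    rw [h0, map_zero, map_zero, add_zero] at hid
    refine ⟨(i : K)⁻¹ • v, Submodule.smul_mem _ _ hv, ?_⟩
    apply Subtype.coe_injective
    beta_reduce
    have hc : E 0 ((i : K)⁻¹ • v) = algebraMap K (FatRing K n k) ((i : K)⁻¹) • E 0 v := by
      rw [show ((i : K)⁻¹ • v) = algebraMap K (FatRing K n k) ((i : K)⁻¹) • v from rfl,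
        map_smul]
    rw [hc, Submodule.coe_smul, hid, inv_nsmul_cancel hKi]
  · -- exactness at Ω^m, m ≥ 3
    intro m w hw h0
    obtain ⟨v, hv, -, hid⟩ := W4 ε hε E hE i m w hw
    rw [h0, ZeroMemClass.coe_zero, map_zero, add_zero] at hid
    refine ⟨(i : K)⁻¹ • v, Submodule.smul_mem _ _ hv, ?_⟩
    apply Subtype.coe_injective
    beta_reduce
    have hc : E (m+1) ((i : K)⁻¹ • v)
        = algebraMap K (FatRing K n k) ((i : K)⁻¹) • E (m+1) v := by
      rw [show ((i : K)⁻¹ • v) = algebraMap K (FatRing K n k) ((i : K)⁻¹) • v from rfl,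
        map_smul]
    rw [hc, Submodule.coe_smul, hid, inv_nsmul_cancel hKi]

end
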